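/- arXiv:2511.05739 — 2 statements merged into one kernel-verified Lean document; each statement's English description precedes it below -/
import Mathlib

section
/- A type A is ●-modal if and only if the type σ → A has exactly one element; precisely, the canonical map η• : A → ●A is bijective if and only if (σ → A) is nonempty and a subsingleton. -/
universe u

variable (σ : Prop) (A : Type u)

def closedRel (σ : Prop) (A : Type u) : (A ⊕ PLift σ) → (A ⊕ PLift σ) → Prop :=
  fun x y => (∃ a : A, x = Sum.inl a) ∧ (∃ s : PLift σ, y = Sum.inr s)

def ClosedMod (σ : Prop) (A : Type u) : Type u := Quot (closedRel σ A)

def etaBullet (σ : Prop) (A : Type u) (a : A) : ClosedMod σ A :=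
  Quot.mk (closedRel σ A) (Sum.inl a)

theorem closedModal_iff_unique (σ : Prop) (A : Type u) :
    Function.Bijective (etaBullet σ A) ↔
      (Nonempty (σ → A) ∧ Subsingleton (σ → A)) := by
  constructor
  · rintro ⟨hinj, hsurj⟩
    have key : ∀ (a b : A), σ → a = b := by
      intro a b s
      apply hinj
      have h1 : etaBullet σ A a = Quot.mk (closedRel σ A) (Sum.inr ⟨s⟩) :=
        Quot.sound ⟨⟨a, rfl⟩, ⟨⟨s⟩, rfl⟩⟩
      have h2 : etaBullet σ A b = Quot.mk (closedRel σ A) (Sum.inr ⟨s⟩) :=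
        Quot.sound ⟨⟨b, rfl⟩, ⟨⟨s⟩, rfl⟩⟩
      rw [h1, h2]
    constructor
    · constructor
      intro s
      exact Classical.choose (hsurj (Quot.mk (closedRel σ A) (Sum.inr ⟨s⟩)))
    · exact ⟨fun f g => funext fun s => key (f s) (g s) s⟩
  · rintro ⟨⟨f⟩, hsub⟩
    constructor
    · intro a b hab
      let g : (A ⊕ PLift σ) → A := fun x => Sum.elim id (fun s => f s.down) x
      have hresp : ∀ x y, closedRel σ A x y → g x = g y := by
        rintro x y ⟨⟨a', rfl⟩, ⟨s, rfl⟩⟩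
        have : (fun _ : σ => a') = f := hsub.elim _ _
        simpa [g] using congrFun this s.down
      have := congrArg (Quot.lift g hresp) hab
      simpa [etaBullet, g] using this
    · intro q
      induction q using Quot.ind with
      | _ x =>
        cases x with
        | inl a => exact ⟨a, rfl⟩
        | inr s => exact ⟨f s.down, Quot.sound ⟨⟨_, rfl⟩, ⟨s, rfl⟩⟩⟩
end

section
/- Jibladze's formula for the initial algebra of lifting, classically: the type ω := {f : ℕ → Prop // (∀ n, f (n+1) → f n) ∧ ∀ p : Prop, (∀ n, (f n → p) → p) → p} is equivalent to ℕ, via sending n : ℕ to the chain (fun k => k < n). -/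
def Omega : Type :=
  {f : ℕ → Prop // (∀ n, f (n + 1) → f n) ∧ ∀ p : Prop, (∀ n, (f n → p) → p) → p}

def Omega.ofNat (n : ℕ) : Omega :=
  ⟨fun k => k < n,
    fun _ h => Nat.lt_of_succ_lt h,
    fun _ h => h n (fun hlt => absurd hlt (Nat.lt_irrefl n))⟩

attribute [local instance] Classical.propDecidable

lemma Omega.exists_not (f : Omega) : ∃ n, ¬ f.1 n := by
  by_contra h
  push_neg at h
  exact f.2.2 False (fun n g => g (h n))

lemma Omega.anti (f : Omega) {m k : ℕ} (h : m ≤ k) (hk : f.1 k) : f.1 m := by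
  induction k with
  | zero => simpa [Nat.le_zero.mp h] using hk
  | succ k ih =>
    rcases Nat.lt_or_ge m (k+1) with h' | h'
    · exact ih (Nat.lt_succ_iff.mp h') (f.2.1 k hk)
    · have : m = k + 1 := le_antisymm h h'
      simpa [this] using hk

noncomputable def Omega.toNat (f : Omega) : ℕ := Nat.find f.exists_not

theorem omega_equiv_nat :
    ∃ e : Omega ≃ ℕ, ∀ n : ℕ, e.symm n = Omega.ofNat n := by
  refine ⟨⟨Omega.toNat, Omega.ofNat, ?_, ?_⟩, fun n => rfl⟩
  · intro f
    apply Subtype.ext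
    funext k
    show (k < Omega.toNat f) = f.1 k
    simp only [Omega.toNat]
    apply propext
    constructor
    · intro hk
      by_contra hfk
      exact absurd (Nat.find_le hfk) (Nat.not_le.mpr hk)
    · intro hfk
      by_contra h
      exact (Nat.find_spec f.exists_not) (f.anti (Nat.not_lt.mp h) hfk)
  · intro n
    simp only [Omega.toNat]
    rw [Nat.find_eq_iff]
    exact ⟨Nat.lt_irrefl n, fun m hm => not_not_intro hm⟩
end
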